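/- arXiv:1401.6962 — 6 statements merged into one kernel-verified Lean document; each statement's English description precedes it below -/
import Mathlib

section
/- For positive semidefinite matrices A and B, the inequality (rank(A) + rank(B))/2 ≤ rank(A + B) holds, with equality if and only if the column spaces of A and B coincide. -/
open Matrix Module

noncomputable def eN (N : ℕ) : EuclideanSpace ℝ (Fin N) ≃ₗ[ℝ] (Fin N → ℝ) :=
  WithLp.linearEquiv 2 ℝ (Fin N → ℝ)

noncomputable def phi {N : ℕ} (K : Submodule ℝ (Fin N → ℝ)) : Submodule ℝ (Fin N → ℝ) :=
  ((K.comap (eN N).toLinearMap)ᗮ).map (eN N).toLinearMap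

lemma phi_inj {N : ℕ} : Function.Injective (phi (N := N)) := by
  intro K K' h
  have h1 : (K.comap (eN N).toLinearMap)ᗮ = (K'.comap (eN N).toLinearMap)ᗮ :=
    Submodule.map_injective_of_injective (f := (eN N).toLinearMap) (eN N).injective h
  have h2 := congrArg Submodule.orthogonal h1
  rw [Submodule.orthogonal_orthogonal, Submodule.orthogonal_orthogonal] at h2
  exact Submodule.comap_injective_of_surjective (eN N).surjective h2

lemma finrank_phi {N : ℕ} (K : Submodule ℝ (Fin N → ℝ)) :
    finrank ℝ (phi K) + finrank ℝ K = N := by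
  rw [phi, LinearEquiv.finrank_map_eq]
  have h1 : finrank ℝ (K.comap (eN N).toLinearMap) = finrank ℝ K := by
    rw [Submodule.comap_equiv_eq_map_symm, LinearEquiv.finrank_map_eq]
  have h2 := Submodule.finrank_add_finrank_orthogonal (K.comap (eN N).toLinearMap)
  rw [finrank_euclideanSpace, Fintype.card_fin] at h2
  omega

lemma range_eq_phi_ker {N : ℕ} (M : Matrix (Fin N) (Fin N) ℝ) (hM : M.IsHermitian) :
    LinearMap.range M.mulVecLin = phi (LinearMap.ker M.mulVecLin) := by
  have hMt : Mᵀ = M := hM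
  apply Submodule.eq_of_le_of_finrank_le
  · rintro y ⟨x, rfl⟩
    refine ⟨(eN N).symm (M.mulVecLin x), ?_, by simp [eN]⟩
    simp only [SetLike.mem_coe, Submodule.mem_orthogonal]
    intro z hz
    have hz' : M *ᵥ ((eN N) z) = 0 := hz
    have : ((eN N) z) ⬝ᵥ (M *ᵥ x) = 0 := by
      rw [dotProduct_mulVec, ← mulVec_transpose, hMt, hz', zero_dotProduct]
    simpa [eN, PiLp.inner_apply, RCLike.inner_apply, dotProduct, mulVecLin_apply, mul_comm] using this
  · have h1 := finrank_phi (LinearMap.ker M.mulVecLin)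
    have h2 := LinearMap.finrank_range_add_finrank_ker M.mulVecLin
    simp only [Module.finrank_pi, Fintype.card_fin] at h2
    omega

lemma ker_add_psd {N : ℕ} {A B : Matrix (Fin N) (Fin N) ℝ}
    (hA : A.PosSemidef) (hB : B.PosSemidef) :
    LinearMap.ker (A + B).mulVecLin =
      LinearMap.ker A.mulVecLin ⊓ LinearMap.ker B.mulVecLin := by
  ext x
  simp only [LinearMap.mem_ker, Submodule.mem_inf, mulVecLin_apply, add_mulVec]
  constructor
  · intro h
    have ha := hA.dotProduct_mulVec_nonneg x
    have hb := hB.dotProduct_mulVec_nonneg x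
    simp only [star_trivial] at ha hb
    have hsum : x ⬝ᵥ A *ᵥ x + x ⬝ᵥ B *ᵥ x = 0 := by
      rw [← dotProduct_add, h, dotProduct_zero]
    have h1 : x ⬝ᵥ A *ᵥ x = 0 := by linarith
    have h2 : x ⬝ᵥ B *ᵥ x = 0 := by linarith
    exact ⟨(hA.dotProduct_mulVec_zero_iff x).1 (by simpa using h1),
      (hB.dotProduct_mulVec_zero_iff x).1 (by simpa using h2)⟩
  · rintro ⟨h1, h2⟩
    rw [h1, h2, add_zero]

theorem stmt_3 (N : ℕ) (A B : Matrix (Fin N) (Fin N) ℝ)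
    (hA : A.PosSemidef) (hB : B.PosSemidef) :
    A.rank + B.rank ≤ 2 * (A + B).rank ∧
      (A.rank + B.rank = 2 * (A + B).rank ↔
        LinearMap.range A.mulVecLin = LinearMap.range B.mulVecLin) := by
  set kA := LinearMap.ker A.mulVecLin with hkA
  set kB := LinearMap.ker B.mulVecLin with hkB
  have hrankA : A.rank = finrank ℝ (LinearMap.range A.mulVecLin) := rfl
  have hrankB : B.rank = finrank ℝ (LinearMap.range B.mulVecLin) := rfl
  have hrankS : (A + B).rank = finrank ℝ (LinearMap.range (A + B).mulVecLin) := rfl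
  have e1 : A.rank + finrank ℝ kA = N := by
    have := LinearMap.finrank_range_add_finrank_ker A.mulVecLin
    simpa [← hrankA, Module.finrank_pi] using this
  have e2 : B.rank + finrank ℝ kB = N := by
    have := LinearMap.finrank_range_add_finrank_ker B.mulVecLin
    simpa [← hrankB, Module.finrank_pi] using this
  have e3 : (A + B).rank + finrank ℝ (kA ⊓ kB : Submodule ℝ (Fin N → ℝ)) = N := by
    have := LinearMap.finrank_range_add_finrank_ker (A + B).mulVecLin
    rw [ker_add_psd hA hB] at this
    simpa [← hrankS, Module.finrank_pi] using this
  have e4 := Submodule.finrank_sup_add_finrank_inf_eq kA kB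
  have e5 : finrank ℝ (kA ⊓ kB : Submodule ℝ (Fin N → ℝ)) ≤
      finrank ℝ (kA ⊔ kB : Submodule ℝ (Fin N → ℝ)) :=
    Submodule.finrank_mono inf_le_sup
  refine ⟨by omega, ?_, ?_⟩
  · intro heq
    have h6 : finrank ℝ (kA ⊔ kB : Submodule ℝ (Fin N → ℝ)) =
        finrank ℝ (kA ⊓ kB : Submodule ℝ (Fin N → ℝ)) := by omega
    have h7 : kA ⊓ kB = kA ⊔ kB := Submodule.eq_of_le_of_finrank_le inf_le_sup h6.le
    have hkk : kA = kB :=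
      le_antisymm ((le_sup_left.trans_eq h7.symm).trans inf_le_right)
        ((le_sup_right.trans_eq h7.symm).trans inf_le_left)
    rw [range_eq_phi_ker A hA.1, range_eq_phi_ker B hB.1, ← hkA, ← hkB, hkk]
  · intro hr
    have hkk : kA = kB := by
      apply phi_inj
      rw [hkA, hkB, ← range_eq_phi_ker A hA.1, ← range_eq_phi_ker B hB.1]
      exact hr
    have h8 : (kA ⊔ kB : Submodule ℝ (Fin N → ℝ)) = kA ⊓ kB := by
      rw [hkk, sup_idem, inf_idem]
    have h9 : finrank ℝ (kA ⊔ kB : Submodule ℝ (Fin N → ℝ)) =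
        finrank ℝ (kA ⊓ kB : Submodule ℝ (Fin N → ℝ)) := by rw [h8]
    omega
end

section
/- Let S₁, S₂ be positive semidefinite N×N matrices with ranks r₁, r₂, and let r₁₂ = rank(S₁+S₂). Then the ratio det((S₁+S₂)/2 + σ²·I) / sqrt(det(S₁ + σ²·I)·det(S₂ + σ²·I)) equals 2^{−r₁₂}·σ^{2((r₁+r₂)/2 − r₁₂)}·(pdet(S₁+S₂)/sqrt(pdet(S₁)·pdet(S₂)))·(1 + o(1)) as σ² → 0. -/
open Matrix Filter

/-- The pseudo-determinant of a Hermitian real matrix: the product of its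
nonzero eigenvalues. -/
noncomputable def pdet {N : ℕ} (S : Matrix (Fin N) (Fin N) ℝ) (h : S.IsHermitian) : ℝ :=
  ∏ i ∈ Finset.univ.filter (fun i => h.eigenvalues i ≠ 0), h.eigenvalues i

/-- The "regular factor": the product over nonzero eigenvalues of `λᵢ + t`. -/
noncomputable def gfun {N : ℕ} (S : Matrix (Fin N) (Fin N) ℝ) (h : S.IsHermitian) (t : ℝ) : ℝ :=
  ∏ i ∈ Finset.univ.filter (fun i => h.eigenvalues i ≠ 0), (h.eigenvalues i + t)

lemma gfun_zero {N : ℕ} (S : Matrix (Fin N) (Fin N) ℝ) (h : S.IsHermitian) :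
    gfun S h 0 = pdet S h := by
  simp [gfun, pdet]

lemma gfun_pos {N : ℕ} {S : Matrix (Fin N) (Fin N) ℝ} (hS : S.PosSemidef)
    (h : S.IsHermitian) {t : ℝ} (ht : 0 ≤ t) : 0 < gfun S h t := by
  refine Finset.prod_pos fun i hi => ?_
  have h1 : 0 ≤ h.eigenvalues i := hS.eigenvalues_nonneg i
  have h2 : h.eigenvalues i ≠ 0 := (Finset.mem_filter.mp hi).2
  have : 0 < h.eigenvalues i := lt_of_le_of_ne h1 (Ne.symm h2)
  linarith

lemma gfun_continuous {N : ℕ} (S : Matrix (Fin N) (Fin N) ℝ) (h : S.IsHermitian) :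
    Continuous (fun t => gfun S h t) := by
  unfold gfun
  exact continuous_finset_prod _ fun i _ => continuous_const.add continuous_id

lemma det_add_smul_one {N : ℕ} (S : Matrix (Fin N) (Fin N) ℝ) (h : S.IsHermitian) (t : ℝ) :
    (S + t • (1 : Matrix (Fin N) (Fin N) ℝ)).det = ∏ i, (h.eigenvalues i + t) := by
  have key : S + t • (1 : Matrix (Fin N) (Fin N) ℝ) =
      (h.eigenvectorUnitary : Matrix (Fin N) (Fin N) ℝ) *
      (diagonal (fun i => h.eigenvalues i + t)) *
      star (h.eigenvectorUnitary : Matrix (Fin N) (Fin N) ℝ) := by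
    have hD : (diagonal (fun i => h.eigenvalues i + t) : Matrix (Fin N) (Fin N) ℝ)
        = diagonal (RCLike.ofReal ∘ h.eigenvalues) + t • (1 : Matrix (Fin N) (Fin N) ℝ) := by
      ext i j
      by_cases hij : i = j <;> simp [diagonal, one_apply, hij]
    have hU : (h.eigenvectorUnitary : Matrix (Fin N) (Fin N) ℝ) *
        star (h.eigenvectorUnitary : Matrix (Fin N) (Fin N) ℝ) = 1 :=
      (Matrix.mem_unitaryGroup_iff).mp h.eigenvectorUnitary.2
    rw [hD, mul_add, add_mul, ← Unitary.conjStarAlgAut_apply (S := ℝ), ← h.spectral_theorem]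
    congr 1
    rw [Matrix.mul_smul, Matrix.smul_mul, mul_one, hU]
  rw [key, det_mul_right_comm]
  have hU : (h.eigenvectorUnitary : Matrix (Fin N) (Fin N) ℝ) *
      star (h.eigenvectorUnitary : Matrix (Fin N) (Fin N) ℝ) = 1 :=
    (Matrix.mem_unitaryGroup_iff).mp h.eigenvectorUnitary.2
  rw [hU, one_mul, det_diagonal]

lemma card_zero_eigs {N : ℕ} (S : Matrix (Fin N) (Fin N) ℝ) (h : S.IsHermitian) :
    (Finset.univ.filter (fun i => h.eigenvalues i = 0)).card = N - S.rank := by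
  have hr : S.rank = (Finset.univ.filter (fun i => h.eigenvalues i ≠ 0)).card := by
    rw [h.rank_eq_card_non_zero_eigs, Fintype.card_subtype]
  have := Finset.card_filter_add_card_filter_not
    (s := (Finset.univ : Finset (Fin N))) (p := fun i => h.eigenvalues i = 0)
  simp only [Finset.card_univ, Fintype.card_fin] at this
  have h2 : (Finset.univ.filter (fun i => ¬ h.eigenvalues i = 0)).card
      = (Finset.univ.filter (fun i => h.eigenvalues i ≠ 0)).card := rfl
  omega

lemma det_factor {N : ℕ} (S : Matrix (Fin N) (Fin N) ℝ) (h : S.IsHermitian) (t : ℝ) :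
    (S + t • (1 : Matrix (Fin N) (Fin N) ℝ)).det = t ^ (N - S.rank) * gfun S h t := by
  rw [det_add_smul_one S h t,
    ← Finset.prod_filter_mul_prod_filter_not Finset.univ (fun i => h.eigenvalues i = 0)]
  congr 1
  rw [Finset.prod_congr rfl (fun i hi => by
    rw [(Finset.mem_filter.mp hi).2, zero_add]), Finset.prod_const, card_zero_eigs S h]

theorem stmt_6 (N : ℕ) (S₁ S₂ : Matrix (Fin N) (Fin N) ℝ)
    (h₁ : S₁.PosSemidef) (h₂ : S₂.PosSemidef) :
    Tendsto
      (fun t : ℝ =>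
        (((1 / 2 : ℝ) • (S₁ + S₂) + t • (1 : Matrix (Fin N) (Fin N) ℝ)).det /
          Real.sqrt ((S₁ + t • (1 : Matrix (Fin N) (Fin N) ℝ)).det *
            (S₂ + t • (1 : Matrix (Fin N) (Fin N) ℝ)).det)) /
        ((2 : ℝ) ^ (-((S₁ + S₂).rank : ℝ)) *
          t ^ (((S₁.rank : ℝ) + S₂.rank) / 2 - (S₁ + S₂).rank) *
          (pdet (S₁ + S₂) (h₁.add h₂).isHermitian /
            Real.sqrt (pdet S₁ h₁.isHermitian * pdet S₂ h₂.isHermitian))))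
      (nhdsWithin 0 (Set.Ioi 0)) (nhds 1) := by
  set h12 := (h₁.add h₂).isHermitian with hh12
  set P : ℝ := pdet (S₁ + S₂) h12 with hP
  set p : ℝ := pdet S₁ h₁.isHermitian * pdet S₂ h₂.isHermitian with hp
  have hP0 : 0 < P := by rw [hP, ← gfun_zero]; exact gfun_pos (h₁.add h₂) h12 le_rfl
  have hp1 : 0 < pdet S₁ h₁.isHermitian := by
    rw [← gfun_zero]; exact gfun_pos h₁ _ le_rfl
  have hp2 : 0 < pdet S₂ h₂.isHermitian := by
    rw [← gfun_zero]; exact gfun_pos h₂ _ le_rfl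
  have hp0 : 0 < p := mul_pos hp1 hp2
  have hsp0 : 0 < Real.sqrt p := Real.sqrt_pos.mpr hp0
  -- the comparison function
  set F : ℝ → ℝ := fun t =>
    (gfun (S₁ + S₂) h12 (2 * t) * Real.sqrt p) /
      (Real.sqrt (gfun S₁ h₁.isHermitian t * gfun S₂ h₂.isHermitian t) * P) with hF
  have hFtendsto : Tendsto F (nhdsWithin 0 (Set.Ioi 0)) (nhds 1) := by
    have hcont : ContinuousAt F 0 := by
      apply ContinuousAt.div
      · exact (((gfun_continuous (S₁ + S₂) h12).comp
          (continuous_const.mul continuous_id)).mul continuous_const).continuousAt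
      · exact ((Real.continuous_sqrt.comp
          (((gfun_continuous S₁ h₁.isHermitian)).mul
            (gfun_continuous S₂ h₂.isHermitian))).mul continuous_const).continuousAt
      · simp only [mul_zero, gfun_zero, ← hp]
        exact (mul_pos hsp0 hP0).ne'
    have hF0 : F 0 = 1 := by
      simp only [hF, mul_zero, gfun_zero, ← hp, ← hP]
      field_simp
    have := hcont.tendsto
    rw [hF0] at this
    exact this.mono_left nhdsWithin_le_nhds
  refine hFtendsto.congr' ?_
  filter_upwards [self_mem_nhdsWithin] with t (ht : 0 < t)
  -- ranks are at most N
  have hr12le : (S₁ + S₂).rank ≤ N := le_trans ((S₁ + S₂).rank_le_card_width) (by simp)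
  have hr1le : S₁.rank ≤ N := le_trans (S₁.rank_le_card_width) (by simp)
  have hr2le : S₂.rank ≤ N := le_trans (S₂.rank_le_card_width) (by simp)
  set r₁ : ℕ := S₁.rank
  set r₂ : ℕ := S₂.rank
  set r₁₂ : ℕ := (S₁ + S₂).rank
  set G : ℝ := gfun (S₁ + S₂) h12 (2 * t) with hG
  set g1 : ℝ := gfun S₁ h₁.isHermitian t with hg1
  set g2 : ℝ := gfun S₂ h₂.isHermitian t with hg2
  have hg1pos : 0 < g1 := gfun_pos h₁ _ ht.le
  have hg2pos : 0 < g2 := gfun_pos h₂ _ ht.le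
  have hs0 : 0 < Real.sqrt (g1 * g2) := Real.sqrt_pos.mpr (mul_pos hg1pos hg2pos)
  -- numerator
  have hnum : ((1 / 2 : ℝ) • (S₁ + S₂) + t • (1 : Matrix (Fin N) (Fin N) ℝ)).det
      = (2 : ℝ) ^ (-(r₁₂ : ℝ)) * t ^ ((N : ℝ) - r₁₂) * G := by
    have e1 : (1 / 2 : ℝ) • (S₁ + S₂) + t • (1 : Matrix (Fin N) (Fin N) ℝ)
        = (1 / 2 : ℝ) • ((S₁ + S₂) + (2 * t) • (1 : Matrix (Fin N) (Fin N) ℝ)) := by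
      ext i j
      simp [Matrix.add_apply, Matrix.smul_apply, Matrix.one_apply]
      ring_nf
      split <;> ring
    rw [e1, det_smul, det_factor (S₁ + S₂) h12 (2 * t), ← hG]
    have e2 : ((2 : ℝ) * t) ^ (N - r₁₂) = (2 : ℝ) ^ (N - r₁₂) * t ^ (N - r₁₂) := mul_pow _ _ _
    have e3 : ((2 : ℝ)) ^ (N - r₁₂) = (2 : ℝ) ^ ((N : ℝ) - r₁₂) := by
      rw [← Real.rpow_natCast, Nat.cast_sub hr12le]
    have e4 : (t : ℝ) ^ (N - r₁₂) = t ^ ((N : ℝ) - r₁₂) := by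
      rw [← Real.rpow_natCast, Nat.cast_sub hr12le]
    have e5 : ((1 : ℝ) / 2) ^ Fintype.card (Fin N) = (2 : ℝ) ^ (-(N : ℝ)) := by
      rw [Real.rpow_neg (by norm_num), Real.rpow_natCast, Fintype.card_fin]
      simp [inv_pow]
    rw [e2, e3, e4, e5, show (2 : ℝ) ^ (-(N : ℝ)) * ((2 : ℝ) ^ ((N : ℝ) - r₁₂) *
        t ^ ((N : ℝ) - r₁₂) * G) = ((2 : ℝ) ^ (-(N : ℝ)) * (2 : ℝ) ^ ((N : ℝ) - r₁₂)) *
        t ^ ((N : ℝ) - r₁₂) * G by ring,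
      ← Real.rpow_add (by norm_num : (0:ℝ) < 2),
      show (-(N : ℝ) + ((N : ℝ) - r₁₂)) = -(r₁₂ : ℝ) by ring]
  -- denominator
  have hden : Real.sqrt ((S₁ + t • (1 : Matrix (Fin N) (Fin N) ℝ)).det *
      (S₂ + t • (1 : Matrix (Fin N) (Fin N) ℝ)).det)
      = t ^ ((N : ℝ) - ((r₁ : ℝ) + r₂) / 2) * Real.sqrt (g1 * g2) := by
    rw [det_factor S₁ h₁.isHermitian t, det_factor S₂ h₂.isHermitian t, ← hg1, ← hg2]
    have e4 : (t : ℝ) ^ (N - r₁) = t ^ ((N : ℝ) - r₁) := by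
      rw [← Real.rpow_natCast, Nat.cast_sub hr1le]
    have e5 : (t : ℝ) ^ (N - r₂) = t ^ ((N : ℝ) - r₂) := by
      rw [← Real.rpow_natCast, Nat.cast_sub hr2le]
    rw [e4, e5, show t ^ ((N : ℝ) - r₁) * g1 * (t ^ ((N : ℝ) - r₂) * g2)
        = (t ^ ((N : ℝ) - r₁) * t ^ ((N : ℝ) - r₂)) * (g1 * g2) by ring,
      ← Real.rpow_add ht, Real.sqrt_mul (Real.rpow_nonneg ht.le _),
      Real.sqrt_eq_rpow, ← Real.rpow_mul ht.le,
      show (((N : ℝ) - r₁ + ((N : ℝ) - r₂)) * (1 / 2)) = (N : ℝ) - ((r₁ : ℝ) + r₂) / 2 by ring]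
  -- put it together
  have hsplit : t ^ ((N : ℝ) - r₁₂)
      = t ^ (((r₁ : ℝ) + r₂) / 2 - r₁₂) * t ^ ((N : ℝ) - ((r₁ : ℝ) + r₂) / 2) := by
    rw [← Real.rpow_add ht]
    ring_nf
  have hx : (0 : ℝ) < t ^ (((r₁ : ℝ) + r₂) / 2 - r₁₂) := Real.rpow_pos_of_pos ht _
  have hy : (0 : ℝ) < t ^ ((N : ℝ) - ((r₁ : ℝ) + r₂) / 2) := Real.rpow_pos_of_pos ht _
  have hz : (0 : ℝ) < (2 : ℝ) ^ (-(r₁₂ : ℝ)) := Real.rpow_pos_of_pos (by norm_num) _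
  simp only [hF, ← hg1, ← hg2, ← hG]
  rw [hnum, hden, hsplit]
  field_simp
end

section
/- Let S₁, S₂ be positive semidefinite with (rank(S₁)+rank(S₂))/2 < rank(S₁+S₂). Then the Bhattacharyya bound P_err^{UB}(σ²) = sqrt(P₁P₂)·sqrt(det(S₁+σ²I)·det(S₂+σ²I))^{1/2} / det((S₁+S₂)/2+σ²I)^{1/2} tends to 0 as σ²→0, and log P_err^{UB}(σ²)/log σ² → −(1/2)·((r₁+r₂)/2 − r₁₂), where r₁=rank(S₁), r₂=rank(S₂), r₁₂=rank(S₁+S₂); i.e., the diversity-order equals (2r₁₂ − r₁ − r₂)/4. -/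
open Matrix Filter Finset

lemma det_decomp {N : ℕ} {S : Matrix (Fin N) (Fin N) ℝ} (hS : S.PosSemidef) :
    ∃ g : ℝ → ℝ, Continuous g ∧ 0 < g 0 ∧
      ∀ t : ℝ, (S + t • (1 : Matrix (Fin N) (Fin N) ℝ)).det
        = t ^ (N - S.rank) * g t := by
  classical
  set μ := hS.1.eigenvalues with hμ
  have hdet : ∀ t : ℝ, (S + t • 1).det = ∏ i, (μ i + t) := by
    intro t
    set U : Matrix (Fin N) (Fin N) ℝ := (hS.1.eigenvectorUnitary : Matrix (Fin N) (Fin N) ℝ)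
    have hU : U * star U = 1 := Matrix.mem_unitaryGroup_iff.mp hS.1.eigenvectorUnitary.2
    have h1 : S + t • 1 = U * (diagonal (fun i => μ i + t)) * star U := by
      have hsp := hS.1.spectral_theorem
      have ht : (t • (1 : Matrix (Fin N) (Fin N) ℝ)) = U * (t • 1) * star U := by
        rw [Matrix.mul_smul, Matrix.smul_mul, mul_one, hU]
      calc S + t • 1 = U * diagonal (RCLike.ofReal ∘ μ) * star U + U * (t • 1) * star U := by
            rw [← ht]; exact congrArg (· + t • 1) hsp
        _ = U * (diagonal (fun i => μ i + t)) * star U := by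
            rw [← Matrix.add_mul, ← Matrix.mul_add]
            congr 2
            rw [smul_one_eq_diagonal, diagonal_add]
            rfl
    rw [h1, det_mul_right_comm, hU, one_mul, det_diagonal]
  have hcard : (univ.filter (fun i => μ i = 0)).card = N - S.rank := by
    have h1 : S.rank = Fintype.card {i // μ i ≠ 0} := hS.1.rank_eq_card_non_zero_eigs
    have h5 : Fintype.card {i // μ i = 0} = Fintype.card {i // ¬ μ i ≠ 0} :=
      Fintype.card_congr (Equiv.subtypeEquivRight (fun i => by simp))
    rw [← Fintype.card_subtype, h1, h5, Fintype.card_subtype_compl, Fintype.card_fin]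
  refine ⟨fun t => ∏ i ∈ univ.filter (fun i => μ i ≠ 0), (μ i + t), ?_, ?_, ?_⟩
  · exact continuous_finset_prod _ (fun i _ => continuous_const.add continuous_id)
  · refine Finset.prod_pos (fun i hi => ?_)
    rw [add_zero]
    exact lt_of_le_of_ne (hS.eigenvalues_nonneg i) (Ne.symm (Finset.mem_filter.mp hi).2)
  · intro t
    rw [hdet t, ← Finset.prod_filter_mul_prod_filter_not univ (fun i => μ i = 0), ← hcard]
    congr 1
    rw [Finset.prod_congr rfl (fun i hi => by rw [(Finset.mem_filter.mp hi).2, zero_add]),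
      Finset.prod_const]

theorem stmt_8 (N : ℕ) (S₁ S₂ : Matrix (Fin N) (Fin N) ℝ)
    (h₁ : S₁.PosSemidef) (h₂ : S₂.PosSemidef)
    (hrank : S₁.rank + S₂.rank < 2 * (S₁ + S₂).rank)
    (P₁ P₂ : ℝ) (hP₁ : 0 < P₁) (hP₂ : 0 < P₂) (hP : P₁ + P₂ = 1)
    (Perr : ℝ → ℝ)
    (hPerr : ∀ t : ℝ, 0 < t →
      Perr t = Real.sqrt (P₁ * P₂) *
        (((1 / 2 : ℝ) • (S₁ + S₂) + t • (1 : Matrix (Fin N) (Fin N) ℝ)).det /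
          Real.sqrt ((S₁ + t • (1 : Matrix (Fin N) (Fin N) ℝ)).det *
            (S₂ + t • (1 : Matrix (Fin N) (Fin N) ℝ)).det)) ^ (-(1 / 2 : ℝ))) :
    Tendsto Perr (nhdsWithin 0 (Set.Ioi 0)) (nhds 0) ∧
    Tendsto (fun t : ℝ => Real.log (Perr t) / Real.log t)
      (nhdsWithin 0 (Set.Ioi 0))
      (nhds (-(1 / 2 : ℝ) * (((S₁.rank : ℝ) + S₂.rank) / 2 - (S₁ + S₂).rank))) := by
  classical
  obtain ⟨g₁, hg₁c, hg₁0, hg₁⟩ := det_decomp h₁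
  obtain ⟨g₂, hg₂c, hg₂0, hg₂⟩ := det_decomp h₂
  obtain ⟨g₃, hg₃c, hg₃0, hg₃⟩ := det_decomp (h₁.add h₂)
  set r₁ := S₁.rank with hr₁def
  set r₂ := S₂.rank with hr₂def
  set r₃ := (S₁ + S₂).rank with hr₃def
  set e : ℝ := -(1 / 2 : ℝ) * (((r₁ : ℝ) + r₂) / 2 - r₃) with he_def
  have hr₁N : r₁ ≤ N := S₁.rank_le_card_width.trans (by simp)
  have hr₂N : r₂ ≤ N := S₂.rank_le_card_width.trans (by simp)
  have hr₃N : r₃ ≤ N := (S₁ + S₂).rank_le_card_width.trans (by simp)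
  have he_pos : 0 < e := by
    have : (r₁ : ℝ) + r₂ < 2 * r₃ := by exact_mod_cast hrank
    rw [he_def]; linarith
  -- the constant K
  set K : ℝ := Real.sqrt (P₁ * P₂) with hKdef
  have hK : 0 < K := Real.sqrt_pos.mpr (mul_pos hP₁ hP₂)
  -- gA for the average matrix
  set gA : ℝ → ℝ := fun t => (1 / 2 : ℝ) ^ N * 2 ^ (N - r₃) * g₃ (2 * t) with hgAdef
  have hgAc : Continuous gA := by
    exact continuous_const.mul (hg₃c.comp (continuous_const.mul continuous_id))
  have hgA0 : 0 < gA 0 := by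
    have : (2 : ℝ) * 0 = 0 := by ring
    simp only [hgAdef, this]
    positivity
  have hgA : ∀ t : ℝ,
      ((1 / 2 : ℝ) • (S₁ + S₂) + t • (1 : Matrix (Fin N) (Fin N) ℝ)).det
        = t ^ (N - r₃) * gA t := by
    intro t
    have hsm : (1 / 2 : ℝ) • (S₁ + S₂) + t • (1 : Matrix (Fin N) (Fin N) ℝ)
        = (1 / 2 : ℝ) • ((S₁ + S₂) + (2 * t) • (1 : Matrix (Fin N) (Fin N) ℝ)) := by
      module
    rw [hsm, det_smul, Fintype.card_fin, hg₃ (2 * t), mul_pow]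
    simp only [hgAdef]
    ring
  -- eventual positivity
  have hev : ∀ᶠ t in nhdsWithin (0:ℝ) (Set.Ioi 0),
      0 < t ∧ 0 < g₁ t ∧ 0 < g₂ t ∧ 0 < gA t := by
    have e₁ : ∀ᶠ t in nhds (0:ℝ), 0 < g₁ t :=
      (hg₁c.tendsto 0).eventually (eventually_gt_nhds hg₁0)
    have e₂ : ∀ᶠ t in nhds (0:ℝ), 0 < g₂ t :=
      (hg₂c.tendsto 0).eventually (eventually_gt_nhds hg₂0)
    have e₃ : ∀ᶠ t in nhds (0:ℝ), 0 < gA t :=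
      (hgAc.tendsto 0).eventually (eventually_gt_nhds hgA0)
    have ht : ∀ᶠ t in nhdsWithin (0:ℝ) (Set.Ioi 0), 0 < t := self_mem_nhdsWithin
    filter_upwards [ht, e₁.filter_mono nhdsWithin_le_nhds,
      e₂.filter_mono nhdsWithin_le_nhds, e₃.filter_mono nhdsWithin_le_nhds] with t h1 h2 h3 h4
    exact ⟨h1, h2, h3, h4⟩
  -- the slowly varying part
  set L : ℝ → ℝ := fun t => Real.log K - (1/2) * Real.log (gA t)
      + (1/4) * Real.log (g₁ t) + (1/4) * Real.log (g₂ t) with hLdef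
  have hLtend : Tendsto L (nhdsWithin (0:ℝ) (Set.Ioi 0)) (nhds (L 0)) := by
    have : ContinuousAt L 0 := by
      have c₁ : ContinuousAt (fun t => Real.log (g₁ t)) 0 :=
        (Real.continuousAt_log hg₁0.ne').comp hg₁c.continuousAt
      have c₂ : ContinuousAt (fun t => Real.log (g₂ t)) 0 :=
        (Real.continuousAt_log hg₂0.ne').comp hg₂c.continuousAt
      have c₃ : ContinuousAt (fun t => Real.log (gA t)) 0 :=
        (Real.continuousAt_log hgA0.ne').comp hgAc.continuousAt
      exact ((continuousAt_const.sub (continuousAt_const.mul c₃)).add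
        (continuousAt_const.mul c₁)).add (continuousAt_const.mul c₂)
    exact this.tendsto.mono_left nhdsWithin_le_nhds
  -- coefficient computation
  have hcoef : (-(1/2) : ℝ) * ((N - r₃ : ℕ) : ℝ)
      + (1/4) * ((N - r₁ : ℕ) : ℝ) + (1/4) * ((N - r₂ : ℕ) : ℝ) = e := by
    rw [Nat.cast_sub hr₁N, Nat.cast_sub hr₂N, Nat.cast_sub hr₃N, he_def]
    ring
  -- the key eventual identity
  have hkey : ∀ᶠ t in nhdsWithin (0:ℝ) (Set.Ioi 0),
      0 < Perr t ∧ Real.log (Perr t) = L t + e * Real.log t := by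
    filter_upwards [hev] with t h
    obtain ⟨ht, hg1t, hg2t, hgAt⟩ := h
    have hB : 0 < t ^ (N - r₁) * g₁ t := by positivity
    have hC : 0 < t ^ (N - r₂) * g₂ t := by positivity
    have hA : 0 < t ^ (N - r₃) * gA t := by positivity
    set X : ℝ := t ^ (N - r₃) * gA t /
      Real.sqrt ((t ^ (N - r₁) * g₁ t) * (t ^ (N - r₂) * g₂ t)) with hXdef
    have hX : 0 < X := div_pos hA (Real.sqrt_pos.mpr (mul_pos hB hC))
    have hPt : Perr t = K * X ^ (-(1/2 : ℝ)) := by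
      rw [hPerr t ht, hgA t, hg₁ t, hg₂ t]
    constructor
    · rw [hPt]; exact mul_pos hK (Real.rpow_pos_of_pos hX _)
    · have hlog : Real.log (Perr t) = Real.log K + (-(1/2)) * Real.log X := by
        rw [hPt, Real.log_mul hK.ne' (Real.rpow_pos_of_pos hX _).ne',
          Real.log_rpow hX]
      have hlogX : Real.log X = (((N - r₃ : ℕ) : ℝ) * Real.log t + Real.log (gA t))
          - (1/2) * ((((N - r₁ : ℕ) : ℝ) * Real.log t + Real.log (g₁ t))
            + (((N - r₂ : ℕ) : ℝ) * Real.log t + Real.log (g₂ t))) := by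
        rw [hXdef, Real.log_div hA.ne' (Real.sqrt_pos.mpr (mul_pos hB hC)).ne',
          Real.log_sqrt (mul_pos hB hC).le,
          Real.log_mul hB.ne' hC.ne',
          Real.log_mul (by positivity) hg1t.ne',
          Real.log_mul (by positivity) hg2t.ne',
          Real.log_mul (by positivity) hgAt.ne',
          Real.log_pow, Real.log_pow, Real.log_pow]
        ring
      rw [hlog, hlogX, hLdef]
      linear_combination Real.log t * hcoef
  -- log Perr → -∞
  have hF : Tendsto (fun t => Real.log (Perr t)) (nhdsWithin (0:ℝ) (Set.Ioi 0)) atBot := by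
    have hmul : Tendsto (fun t : ℝ => e * Real.log t)
        (nhdsWithin (0:ℝ) (Set.Ioi 0)) atBot :=
      Real.tendsto_log_nhdsGT_zero.const_mul_atBot he_pos
    have hLe : ∀ᶠ t in nhdsWithin (0:ℝ) (Set.Ioi 0), L t ≤ L 0 + 1 :=
      hLtend.eventually (eventually_le_nhds (lt_add_one (L 0)))
    have : Tendsto (fun t => L t + e * Real.log t)
        (nhdsWithin (0:ℝ) (Set.Ioi 0)) atBot :=
      tendsto_atBot_add_left_of_ge' _ (L 0 + 1) hLe hmul
    exact this.congr' (hkey.mono fun t h => h.2.symm)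
  constructor
  · -- Perr → 0
    have hexp : Tendsto (fun t => Real.exp (Real.log (Perr t)))
        (nhdsWithin (0:ℝ) (Set.Ioi 0)) (nhds 0) :=
      Real.tendsto_exp_atBot.comp hF
    refine hexp.congr' (hkey.mono fun t h => ?_)
    rw [Real.exp_log h.1]
  · -- log Perr / log t → e
    have hinv : Tendsto (fun t : ℝ => (Real.log t)⁻¹)
        (nhdsWithin (0:ℝ) (Set.Ioi 0)) (nhds 0) := by
      have h1 : Tendsto (fun t : ℝ => -Real.log t)
          (nhdsWithin (0:ℝ) (Set.Ioi 0)) atTop :=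
        tendsto_neg_atBot_atTop.comp Real.tendsto_log_nhdsGT_zero
      have h2 := tendsto_inv_atTop_zero.comp h1
      have h3 := h2.neg
      simp only [Function.comp_def, inv_neg, neg_neg, neg_zero] at h3
      exact h3
    have hmain : Tendsto (fun t => L t * (Real.log t)⁻¹ + e)
        (nhdsWithin (0:ℝ) (Set.Ioi 0)) (nhds (L 0 * 0 + e)) :=
      (hLtend.mul hinv).add_const e
    rw [mul_zero, zero_add] at hmain
    have hlt1 : ∀ᶠ t in nhdsWithin (0:ℝ) (Set.Ioi 0), t < 1 :=
      (eventually_lt_nhds (by norm_num : (0:ℝ) < 1)).filter_mono nhdsWithin_le_nhds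
    refine hmain.congr' ?_
    filter_upwards [hkey, hev, hlt1] with t hk hpos h1
    have hlogne : Real.log t ≠ 0 := (Real.log_neg hpos.1 h1).ne
    rw [hk.2, add_div, mul_div_cancel_right₀ _ hlogne, div_eq_mul_inv]
end

section
/- Let Φ ∈ ℝ^{M×N} and let S₁, S₂ ∈ ℝ^{N×N} be positive semidefinite. Then rank(Φ(S₁+S₂)Φᵀ) − rank(ΦS₁Φᵀ) ≤ rank(S₁+S₂) − rank(S₁), and symmetrically rank(Φ(S₁+S₂)Φᵀ) − rank(ΦS₂Φᵀ) ≤ rank(S₁+S₂) − rank(S₂). -/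
open Matrix

section Aux

open Submodule LinearMap

private lemma symm_range_eq_aux {N : ℕ} (A : Matrix (Fin N) (Fin N) ℝ) (hA : A.IsHermitian) :
    (LinearMap.range (Matrix.toEuclideanLin A) : Submodule ℝ (EuclideanSpace ℝ (Fin N)))
      = (LinearMap.ker (Matrix.toEuclideanLin A) : Submodule ℝ (EuclideanSpace ℝ (Fin N)))ᗮ := by
  set T : EuclideanSpace ℝ (Fin N) →ₗ[ℝ] EuclideanSpace ℝ (Fin N) := Matrix.toEuclideanLin A with hT
  have hAt : Aᵀ = A := by
    have := hA; rwa [Matrix.IsHermitian, conjTranspose_eq_transpose_of_trivial] at this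
  have hle : LinearMap.range T ≤ (LinearMap.ker T)ᗮ := by
    rintro x ⟨v, rfl⟩
    rw [Submodule.mem_orthogonal]
    intro u hu
    have hu' : A *ᵥ WithLp.ofLp u = 0 := by
      have := congrArg WithLp.ofLp (LinearMap.mem_ker.mp hu)
      simpa [hT, Matrix.ofLp_toEuclideanLin_apply] using this
    have key : (inner ℝ u (T v) : ℝ) = (A *ᵥ WithLp.ofLp u) ⬝ᵥ WithLp.ofLp v := by
      rw [EuclideanSpace.inner_eq_star_dotProduct, hT, Matrix.ofLp_toEuclideanLin_apply]
      simp only [star_trivial]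
      rw [dotProduct_comm, dotProduct_mulVec, ← mulVec_transpose, hAt]
    rw [key, hu', zero_dotProduct]
  apply Submodule.eq_of_le_of_finrank_le hle
  have h1 := LinearMap.finrank_range_add_finrank_ker T
  have h2 := Submodule.finrank_add_finrank_orthogonal (K := LinearMap.ker T)
  have h3 : Module.finrank ℝ (EuclideanSpace ℝ (Fin N)) = N := by simp
  omega

private lemma range_le_range_add_aux {N : ℕ} {S T : Matrix (Fin N) (Fin N) ℝ}
    (hS : S.PosSemidef) (hT : T.PosSemidef) :
    LinearMap.range S.mulVecLin ≤ LinearMap.range (S + T).mulVecLin := by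
  have hker : LinearMap.ker (S + T).mulVecLin ≤ LinearMap.ker S.mulVecLin := by
    intro x hx
    have hx' : (S + T) *ᵥ x = 0 := hx
    have hsum : x ⬝ᵥ S *ᵥ x + x ⬝ᵥ T *ᵥ x = 0 := by
      rw [← dotProduct_add, ← add_mulVec, hx', dotProduct_zero]
    have h1 : 0 ≤ x ⬝ᵥ S *ᵥ x := by simpa using hS.dotProduct_mulVec_nonneg x
    have h2 : 0 ≤ x ⬝ᵥ T *ᵥ x := by simpa using hT.dotProduct_mulVec_nonneg x
    have hz : x ⬝ᵥ S *ᵥ x = 0 := by linarith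
    have : S *ᵥ x = 0 := (hS.dotProduct_mulVec_zero_iff x).mp (by simpa using hz)
    exact this
  have hker' : LinearMap.ker (Matrix.toEuclideanLin (S + T))
      ≤ LinearMap.ker (Matrix.toEuclideanLin S) := by
    intro x hx
    have hx1 : WithLp.ofLp x ∈ LinearMap.ker (S + T).mulVecLin := by
      have := congrArg WithLp.ofLp (LinearMap.mem_ker.mp hx)
      simpa [Matrix.ofLp_toEuclideanLin_apply] using this
    have hx2 : S *ᵥ WithLp.ofLp x = 0 := hker hx1
    rw [LinearMap.mem_ker, Matrix.toEuclideanLin_apply, hx2]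
    rfl
  have hE : LinearMap.range (Matrix.toEuclideanLin S)
      ≤ LinearMap.range (Matrix.toEuclideanLin (S + T)) := by
    rw [symm_range_eq_aux S hS.isHermitian, symm_range_eq_aux (S + T) (hS.add hT).isHermitian]
    exact Submodule.orthogonal_le hker'
  rintro x ⟨v, rfl⟩
  obtain ⟨w, hw⟩ := hE ⟨WithLp.toLp 2 v, rfl⟩
  refine ⟨WithLp.ofLp w, ?_⟩
  have := congrArg WithLp.ofLp hw
  simpa [Matrix.ofLp_toEuclideanLin_apply] using this

private lemma finrank_map_sub_aux {N M : ℕ} (f : (Fin N → ℝ) →ₗ[ℝ] (Fin M → ℝ))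
    (U U' : Submodule ℝ (Fin N → ℝ)) (h : U ≤ U') :
    Module.finrank ℝ (U'.map f) + Module.finrank ℝ U ≤
      Module.finrank ℝ U' + Module.finrank ℝ (U.map f) := by
  have rn : ∀ p : Submodule ℝ (Fin N → ℝ),
      Module.finrank ℝ (p.map f) + Module.finrank ℝ ↥(p ⊓ LinearMap.ker f)
        = Module.finrank ℝ p := by
    intro p
    have h1 := LinearMap.finrank_range_add_finrank_ker (f.domRestrict p)
    rw [LinearMap.range_domRestrict, LinearMap.ker_domRestrict] at h1
    rwa [show Module.finrank ℝ ((LinearMap.ker f).comap p.subtype)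
        = Module.finrank ℝ ↥(p ⊓ LinearMap.ker f) by
      rw [← Submodule.finrank_map_subtype_eq p ((LinearMap.ker f).comap p.subtype),
        Submodule.map_comap_subtype]] at h1
  have hU := rn U
  have hU' := rn U'
  have hmono : Module.finrank ℝ ↥(U ⊓ LinearMap.ker f) ≤
      Module.finrank ℝ ↥(U' ⊓ LinearMap.ker f) :=
    Submodule.finrank_mono (inf_le_inf_right _ h)
  omega

private lemma rank_conj_aux {M N : ℕ} (Φ : Matrix (Fin M) (Fin N) ℝ)
    {S : Matrix (Fin N) (Fin N) ℝ} (hS : S.PosSemidef) :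
    (Φ * S * Φᵀ).rank =
      Module.finrank ℝ ((LinearMap.range S.mulVecLin).map Φ.mulVecLin) := by
  obtain ⟨C, hC, hSC⟩ : ∃ C : Matrix (Fin N) (Fin N) ℝ, C.PosSemidef ∧ C * C = S :=
    open scoped MatrixOrder in
    ⟨CFC.sqrt S, (CFC.sqrt_nonneg S).posSemidef, CFC.sqrt_mul_sqrt_self S hS.nonneg⟩
  have hCt : Cᵀ = C := by
    have := hC.isHermitian
    rwa [Matrix.IsHermitian, conjTranspose_eq_transpose_of_trivial] at this
  have step1 : Φ * S * Φᵀ = (Φ * C) * (Φ * C)ᵀ := by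
    rw [transpose_mul, hCt, ← hSC]
    simp [Matrix.mul_assoc]
  have hrange : LinearMap.range S.mulVecLin = LinearMap.range C.mulVecLin := by
    have hle : LinearMap.range S.mulVecLin ≤ LinearMap.range C.mulVecLin := by
      rw [← hSC, mulVecLin_mul, LinearMap.range_comp]
      exact LinearMap.map_le_range
    refine Submodule.eq_of_le_of_finrank_le hle ?_
    have : S.rank = C.rank := by
      rw [show S = C * Cᵀ by rw [hCt, hSC]]
      exact rank_self_mul_transpose C
    exact le_of_eq this.symm
  rw [step1, rank_self_mul_transpose, Matrix.rank, mulVecLin_mul, LinearMap.range_comp, hrange]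

end Aux

theorem stmt_9 (M N : ℕ) (Φ : Matrix (Fin M) (Fin N) ℝ)
    (S₁ S₂ : Matrix (Fin N) (Fin N) ℝ)
    (h₁ : S₁.PosSemidef) (h₂ : S₂.PosSemidef) :
    ((Φ * (S₁ + S₂) * Φᵀ).rank : ℤ) - (Φ * S₁ * Φᵀ).rank ≤
        ((S₁ + S₂).rank : ℤ) - S₁.rank ∧
      ((Φ * (S₁ + S₂) * Φᵀ).rank : ℤ) - (Φ * S₂ * Φᵀ).rank ≤
        ((S₁ + S₂).rank : ℤ) - S₂.rank := by
  have h₁W : LinearMap.range S₁.mulVecLin ≤ LinearMap.range (S₁ + S₂).mulVecLin :=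
    range_le_range_add_aux h₁ h₂
  have h₂W : LinearMap.range S₂.mulVecLin ≤ LinearMap.range (S₁ + S₂).mulVecLin := by
    have := range_le_range_add_aux h₂ h₁
    rwa [add_comm S₂ S₁] at this
  have key₁ := finrank_map_sub_aux Φ.mulVecLin _ _ h₁W
  have key₂ := finrank_map_sub_aux Φ.mulVecLin _ _ h₂W
  have rA := rank_conj_aux Φ (h₁.add h₂)
  have rB := rank_conj_aux Φ h₁
  have rC := rank_conj_aux Φ h₂
  have dA : (S₁ + S₂).rank = Module.finrank ℝ (LinearMap.range (S₁ + S₂).mulVecLin) := rfl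
  have dB : S₁.rank = Module.finrank ℝ (LinearMap.range S₁.mulVecLin) := rfl
  have dC : S₂.rank = Module.finrank ℝ (LinearMap.range S₂.mulVecLin) := rfl
  constructor
  · rw [rA, rB, dA, dB]; omega
  · rw [rA, rC, dA, dC]; omega
end

section
/- Let Φ ∈ ℝ^{M×N} and S₁, S₂ positive semidefinite N×N. Then 2·rank(Φ(S₁+S₂)Φᵀ) − rank(ΦS₁Φᵀ) − rank(ΦS₂Φᵀ) ≤ 2·rank(S₁+S₂) − rank(S₁) − rank(S₂). That is, the number of non-overlapping dimensions after projection never exceeds the number of non-overlapping dimensions of the original subspaces. -/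
open Matrix
open scoped MatrixOrder

lemma aux_finrank_map_add {K V V' : Type*} [Field K] [AddCommGroup V] [Module K V]
    [AddCommGroup V'] [Module K V'] [FiniteDimensional K V]
    (f : V →ₗ[K] V') (p : Submodule K V) :
    Module.finrank K (p.map f) + Module.finrank K (p ⊓ LinearMap.ker f : Submodule K V)
      = Module.finrank K p := by
  have h := LinearMap.finrank_range_add_finrank_ker (f.domRestrict p)
  rw [LinearMap.range_domRestrict, LinearMap.ker_domRestrict] at h
  have e : Submodule.comap p.subtype (LinearMap.ker f)
      = Submodule.comap p.subtype (p ⊓ LinearMap.ker f) := by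
    rw [Submodule.comap_inf, Submodule.comap_subtype_self, top_inf_eq]
  rw [e] at h
  rw [← h]
  congr 1
  exact ((Submodule.comapSubtypeEquivOfLe
    (inf_le_left : p ⊓ LinearMap.ker f ≤ p)).finrank_eq).symm

lemma aux_range_orth {n : ℕ} (A : Matrix (Fin n) (Fin n) ℝ) (hA : A.IsHermitian) :
    (LinearMap.range (Matrix.toEuclideanLin A))ᗮ = LinearMap.ker (Matrix.toEuclideanLin A) := by
  have hs : (Matrix.toEuclideanLin A).IsSymmetric := Matrix.isHermitian_iff_isSymmetric.mp hA
  ext v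
  simp only [Submodule.mem_orthogonal, LinearMap.mem_ker, LinearMap.mem_range]
  constructor
  · intro h
    have h3 := h _ ⟨Matrix.toEuclideanLin A v, rfl⟩
    rw [hs] at h3
    exact inner_self_eq_zero.mp h3
  · rintro h u ⟨x, rfl⟩
    rw [hs, h, inner_zero_right]

lemma aux_range_le {n : ℕ} (A B : Matrix (Fin n) (Fin n) ℝ)
    (hA : A.IsHermitian) (hB : B.IsHermitian)
    (h : LinearMap.ker (Matrix.toEuclideanLin B) ≤ LinearMap.ker (Matrix.toEuclideanLin A)) :
    LinearMap.range (Matrix.toEuclideanLin A) ≤ LinearMap.range (Matrix.toEuclideanLin B) := by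
  have hA' := aux_range_orth A hA
  have hB' := aux_range_orth B hB
  calc LinearMap.range (Matrix.toEuclideanLin A)
      = (LinearMap.range (Matrix.toEuclideanLin A))ᗮᗮ :=
        (Submodule.orthogonal_orthogonal _).symm
    _ = (LinearMap.ker (Matrix.toEuclideanLin A))ᗮ := by rw [hA']
    _ ≤ (LinearMap.ker (Matrix.toEuclideanLin B))ᗮ := Submodule.orthogonal_le h
    _ = (LinearMap.range (Matrix.toEuclideanLin B))ᗮᗮ := by rw [hB']
    _ = LinearMap.range (Matrix.toEuclideanLin B) := Submodule.orthogonal_orthogonal _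

lemma aux_rank_eq {m n : ℕ} (A : Matrix (Fin m) (Fin n) ℝ) :
    A.rank = Module.finrank ℝ (LinearMap.range (Matrix.toEuclideanLin A)) := by
  rw [Matrix.toEuclideanLin_eq_toLin]
  exact Matrix.rank_eq_finrank_range_toLin A _ _

lemma aux_toEL_mul {m n k : ℕ} (A : Matrix (Fin m) (Fin n) ℝ) (B : Matrix (Fin n) (Fin k) ℝ) :
    Matrix.toEuclideanLin (A * B)
      = (Matrix.toEuclideanLin A).comp (Matrix.toEuclideanLin B) := by
  rw [Matrix.toEuclideanLin_eq_toLin, Matrix.toEuclideanLin_eq_toLin,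
    Matrix.toEuclideanLin_eq_toLin]
  exact Matrix.toLin_mul _ _ _ A B

lemma aux_range_sqrt {n : ℕ} (A : Matrix (Fin n) (Fin n) ℝ) (hA : A.PosSemidef) :
    LinearMap.range (Matrix.toEuclideanLin A)
      = LinearMap.range (Matrix.toEuclideanLin (CFC.sqrt A)) := by
  have hsq : CFC.sqrt A * CFC.sqrt A = A := CFC.sqrt_mul_sqrt_self A hA.nonneg
  have ht : (CFC.sqrt A)ᵀ = CFC.sqrt A := by
    rw [← conjTranspose_eq_transpose_of_trivial]; exact (CFC.sqrt_nonneg A).posSemidef.isHermitian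
  have hle : LinearMap.range (Matrix.toEuclideanLin A)
      ≤ LinearMap.range (Matrix.toEuclideanLin (CFC.sqrt A)) := by
    conv_lhs => rw [← hsq]
    rw [aux_toEL_mul]
    exact LinearMap.range_comp_le_range _ _
  refine Submodule.eq_of_le_of_finrank_le hle ?_
  rw [← aux_rank_eq, ← aux_rank_eq]
  have h2 : A.rank = (CFC.sqrt A).rank := by
    conv_lhs => rw [← hsq]
    nth_rewrite 1 [← ht]
    exact rank_transpose_mul_self _
  rw [h2]

lemma aux_key {M N : ℕ} (Φ : Matrix (Fin M) (Fin N) ℝ) (S T : Matrix (Fin N) (Fin N) ℝ)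
    (hS : S.PosSemidef) (hT : T.PosSemidef) :
    (Φ * (S + T) * Φᵀ).rank + S.rank ≤ (S + T).rank + (Φ * S * Φᵀ).rank := by
  have hST := hS.add hT
  set R : Matrix (Fin N) (Fin N) ℝ := CFC.sqrt (S + T) with hRdef
  set R₁ : Matrix (Fin N) (Fin N) ℝ := CFC.sqrt S with hR₁def
  have hR : R.PosSemidef := (CFC.sqrt_nonneg (S + T)).posSemidef
  have hR₁ : R₁.PosSemidef := (CFC.sqrt_nonneg S).posSemidef
  have hRt : Rᵀ = R := by
    rw [← conjTranspose_eq_transpose_of_trivial]; exact hR.isHermitian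
  have hR₁t : R₁ᵀ = R₁ := by
    rw [← conjTranspose_eq_transpose_of_trivial]; exact hR₁.isHermitian
  have hRR : R * R = S + T := CFC.sqrt_mul_sqrt_self (S + T) hST.nonneg
  have hR₁R₁ : R₁ * R₁ = S := CFC.sqrt_mul_sqrt_self S hS.nonneg
  have e1 : (Φ * (S + T) * Φᵀ).rank = (Φ * R).rank := by
    have : Φ * (S + T) * Φᵀ = (Φ * R) * (Φ * R)ᵀ := by
      rw [transpose_mul, hRt, ← hRR]; simp only [Matrix.mul_assoc]
    rw [this, rank_self_mul_transpose]
  have e2 : (Φ * S * Φᵀ).rank = (Φ * R₁).rank := by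
    have : Φ * S * Φᵀ = (Φ * R₁) * (Φ * R₁)ᵀ := by
      rw [transpose_mul, hR₁t, ← hR₁R₁]; simp only [Matrix.mul_assoc]
    rw [this, rank_self_mul_transpose]
  set f := Matrix.toEuclideanLin Φ with hf
  set W := LinearMap.range (Matrix.toEuclideanLin R) with hW
  set W₁ := LinearMap.range (Matrix.toEuclideanLin R₁) with hW₁
  have hker : LinearMap.ker (Matrix.toEuclideanLin (S + T))
      ≤ LinearMap.ker (Matrix.toEuclideanLin S) := by
    intro v hv
    rw [LinearMap.mem_ker] at hv ⊢
    set x : Fin N → ℝ := (WithLp.equiv 2 (Fin N → ℝ)) v with hx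
    have hv0 : (S + T) *ᵥ x = 0 := by
      simpa [add_mulVec, hx] using congrArg (WithLp.equiv 2 (Fin N → ℝ)) hv
    have hdot : star x ⬝ᵥ S *ᵥ x = 0 := by
      have h0 : star x ⬝ᵥ (S + T) *ᵥ x = 0 := by rw [hv0, dotProduct_zero]
      rw [add_mulVec, dotProduct_add] at h0
      have h1 := hS.dotProduct_mulVec_nonneg x
      have h2 := hT.dotProduct_mulVec_nonneg x
      linarith
    have hSx : S *ᵥ x = 0 := (hS.dotProduct_mulVec_zero_iff x).mp hdot
    apply (WithLp.equiv 2 (Fin N → ℝ)).injective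
    simpa [hx] using hSx
  have hW₁W : W₁ ≤ W := by
    rw [hW, hW₁, ← aux_range_sqrt S hS, ← aux_range_sqrt (S + T) hST]
    exact aux_range_le S (S + T) hS.isHermitian hST.isHermitian hker
  have f1 : (Φ * R).rank = Module.finrank ℝ (W.map f) := by
    rw [aux_rank_eq, aux_toEL_mul, LinearMap.range_comp]
  have f2 : (Φ * R₁).rank = Module.finrank ℝ (W₁.map f) := by
    rw [aux_rank_eq, aux_toEL_mul, LinearMap.range_comp]
  have f3 : (S + T).rank = Module.finrank ℝ W := by
    rw [aux_rank_eq, aux_range_sqrt (S + T) hST]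
  have f4 : S.rank = Module.finrank ℝ W₁ := by
    rw [aux_rank_eq, aux_range_sqrt S hS]
  have g1 := aux_finrank_map_add f W
  have g2 := aux_finrank_map_add f W₁
  have g3 : Module.finrank ℝ (W₁ ⊓ LinearMap.ker f : Submodule ℝ _)
      ≤ Module.finrank ℝ (W ⊓ LinearMap.ker f : Submodule ℝ _) :=
    Submodule.finrank_mono (inf_le_inf_right _ hW₁W)
  rw [e1, e2, f1, f2, f3, f4]
  omega

theorem stmt_10 (M N : ℕ) (Φ : Matrix (Fin M) (Fin N) ℝ)
    (S₁ S₂ : Matrix (Fin N) (Fin N) ℝ)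
    (h₁ : S₁.PosSemidef) (h₂ : S₂.PosSemidef) :
    (2 * (Φ * (S₁ + S₂) * Φᵀ).rank : ℤ) - (Φ * S₁ * Φᵀ).rank - (Φ * S₂ * Φᵀ).rank ≤
      (2 * (S₁ + S₂).rank : ℤ) - S₁.rank - S₂.rank := by
  have k1 := aux_key Φ S₁ S₂ h₁ h₂
  have k2 := aux_key Φ S₂ S₁ h₂ h₁
  rw [add_comm S₂ S₁] at k2
  have k1' : ((Φ * (S₁ + S₂) * Φᵀ).rank : ℤ) + S₁.rank ≤ (S₁ + S₂).rank + (Φ * S₁ * Φᵀ).rank := by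
    exact_mod_cast k1
  have k2' : ((Φ * (S₁ + S₂) * Φᵀ).rank : ℤ) + S₂.rank ≤ (S₁ + S₂).rank + (Φ * S₂ * Φᵀ).rank := by
    exact_mod_cast k2
  linarith
end

section
/- Let Φ be an M×N matrix whose rows consist of orthonormal vectors v₁,…,v_{n₁} and w₁,…,w_{n₂}, where {u's, v's} is an orthonormal basis of Null(S₁), {u's, w's} is an orthonormal basis of Null(S₂), and {u's} is an orthonormal basis of Null(S₁)∩Null(S₂), for PSD matrices S₁, S₂. Then rank(ΦS₁Φᵀ) = n₂, rank(ΦS₂Φᵀ) = n₁, and rank(Φ(S₁+S₂)Φᵀ) = n₁+n₂; consequently 2·rank(Φ(S₁+S₂)Φᵀ) − rank(ΦS₁Φᵀ) − rank(ΦS₂Φᵀ) = 2·rank(S₁+S₂) − rank(S₁) − rank(S₂), i.e., this design achieves the maximal number of non-overlapping dimensions. -/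
open Matrix

section helpers

variable {N : ℕ} {ι : Type*} [Fintype ι]

lemma dot_finset_sum (x : Fin N → ℝ) (s : Finset ι) (f : ι → Fin N → ℝ) :
    x ⬝ᵥ (∑ k ∈ s, f k) = ∑ k ∈ s, x ⬝ᵥ f k := by
  simp only [dotProduct, Finset.sum_apply, Finset.mul_sum]
  exact Finset.sum_comm

lemma li_of_gram [DecidableEq ι] (x : ι → Fin N → ℝ)
    (h : ∀ a b, x a ⬝ᵥ x b = if a = b then (1 : ℝ) else 0) :
    LinearIndependent ℝ x := by
  rw [linearIndependent_iff']
  intro s g hg i hi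
  have h2 := congrArg (fun y => x i ⬝ᵥ y) hg
  simp only [dot_finset_sum, dotProduct_smul, h, smul_eq_mul, mul_ite, mul_one, mul_zero,
    Finset.sum_ite_eq, hi, if_pos, dotProduct_zero] at h2
  exact h2

lemma dot_sum_orthonormal [DecidableEq ι] (x : ι → Fin N → ℝ)
    (h : ∀ a b, x a ⬝ᵥ x b = if a = b then (1 : ℝ) else 0) (c : ι → ℝ) (j : ι) :
    x j ⬝ᵥ (∑ k, c k • x k) = c j := by
  simp [dot_finset_sum, dotProduct_smul, h, mul_ite, Finset.sum_ite_eq']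

lemma dot_span_zero (u : ι → Fin N → ℝ) (x : Fin N → ℝ)
    (hx : ∀ k, x ⬝ᵥ u k = 0) {y : Fin N → ℝ}
    (hy : y ∈ Submodule.span ℝ (Set.range u)) : x ⬝ᵥ y = 0 := by
  induction hy using Submodule.span_induction with
  | mem y hy => obtain ⟨k, rfl⟩ := hy; exact hx k
  | zero => simp
  | add a b _ _ ha hb => simp [dotProduct_add, ha, hb]
  | smul c a _ ha => simp [dotProduct_smul, ha]

lemma psd_exists_sqrt {N : ℕ} {S : Matrix (Fin N) (Fin N) ℝ} (hS : S.PosSemidef) :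
    ∃ Q : Matrix (Fin N) (Fin N) ℝ, Qᵀ = Q ∧ Q * Q = S := by
  open scoped MatrixOrder in
  obtain ⟨X, hX, -, hXX⟩ :=
    CFC.exists_sqrt_of_isSelfAdjoint_of_quasispectrumRestricts hS.isHermitian
      (QuasispectrumRestricts.nnreal_of_nonneg hS.nonneg)
  refine ⟨X, ?_, hXX⟩
  rw [← conjTranspose_eq_transpose_of_trivial]
  exact hX.star_eq

lemma sqrt_dot_key {N : ℕ} {S Q : Matrix (Fin N) (Fin N) ℝ} (hQsym : Qᵀ = Q)
    (hQQ : Q * Q = S) (x : Fin N → ℝ) :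
    (Q *ᵥ x) ⬝ᵥ (Q *ᵥ x) = x ⬝ᵥ S *ᵥ x := by
  have h1 : Qᵀ * Q = S := by rw [hQsym, hQQ]
  conv_rhs => rw [← h1, ← mulVec_mulVec, dotProduct_mulVec, vecMul_transpose]

lemma psd_dot_zero {N : ℕ} {S : Matrix (Fin N) (Fin N) ℝ} (hS : S.PosSemidef)
    {x : Fin N → ℝ} (h : x ⬝ᵥ S *ᵥ x = 0) : S *ᵥ x = 0 := by
  obtain ⟨Q, hQsym, hQQ⟩ := psd_exists_sqrt hS
  have h0 : Q *ᵥ x = 0 := by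
    rw [← dotProduct_self_eq_zero, sqrt_dot_key hQsym hQQ, h]
  rw [← hQQ, ← mulVec_mulVec, h0, mulVec_zero]

lemma rank_sandwich {N : ℕ} {ι : Type*} [Fintype ι] [DecidableEq ι]
    {S : Matrix (Fin N) (Fin N) ℝ} (hS : S.PosSemidef)
    (Φ : Matrix ι (Fin N) ℝ) :
    (Φ * S * Φᵀ).rank + Module.finrank ℝ (LinearMap.ker ((S * Φᵀ).mulVecLin)) =
      Fintype.card ι := by
  obtain ⟨Q, hQsym, hQQ⟩ := psd_exists_sqrt hS
  have hQpsd : Q *ᵥ 0 = 0 := mulVec_zero _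
  have hzero : ∀ y : Fin N → ℝ, Q *ᵥ y = 0 ↔ S *ᵥ y = 0 := by
    intro y
    constructor
    · intro h
      rw [← hQQ, ← mulVec_mulVec, h, mulVec_zero]
    · intro h
      rw [← dotProduct_self_eq_zero, sqrt_dot_key hQsym hQQ, h, dotProduct_zero]
  have hfact : Φ * S * Φᵀ = (Q * Φᵀ)ᵀ * (Q * Φᵀ) := by
    rw [transpose_mul, transpose_transpose, hQsym, ← hQQ]
    simp [Matrix.mul_assoc]
  have hker : LinearMap.ker ((Q * Φᵀ).mulVecLin) = LinearMap.ker ((S * Φᵀ).mulVecLin) := by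
    ext x
    simp only [LinearMap.mem_ker, mulVecLin_apply, ← mulVec_mulVec]
    exact hzero _
  rw [hfact, rank_transpose_mul_self, Matrix.rank, ← hker,
    LinearMap.finrank_range_add_finrank_ker, Module.finrank_fintype_fun_eq_card]

lemma transpose_of_mulVec (f : ι → Fin N → ℝ) (x : ι → ℝ) :
    (Matrix.of f)ᵀ *ᵥ x = ∑ a, x a • f a := by
  ext j
  simp [mulVec, dotProduct, Finset.sum_apply, mul_comm]

end helpers

theorem stmt_19 (N m n₁ n₂ : ℕ) (S₁ S₂ : Matrix (Fin N) (Fin N) ℝ)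
    (h₁ : S₁.PosSemidef) (h₂ : S₂.PosSemidef)
    (u : Fin m → (Fin N → ℝ)) (v : Fin n₁ → (Fin N → ℝ)) (w : Fin n₂ → (Fin N → ℝ))
    (horth₁ : ∀ a b : Fin m ⊕ Fin n₁,
      Sum.elim u v a ⬝ᵥ Sum.elim u v b = if a = b then (1 : ℝ) else 0)
    (hspan₁ : Submodule.span ℝ (Set.range (Sum.elim u v)) = LinearMap.ker S₁.mulVecLin)
    (horth₂ : ∀ a b : Fin m ⊕ Fin n₂,
      Sum.elim u w a ⬝ᵥ Sum.elim u w b = if a = b then (1 : ℝ) else 0)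
    (hspan₂ : Submodule.span ℝ (Set.range (Sum.elim u w)) = LinearMap.ker S₂.mulVecLin)
    (hspanu : Submodule.span ℝ (Set.range u) =
      LinearMap.ker S₁.mulVecLin ⊓ LinearMap.ker S₂.mulVecLin)
    (Φ : Matrix (Fin n₁ ⊕ Fin n₂) (Fin N) ℝ)
    (hΦ : Φ = Matrix.of (Sum.elim v w)) :
    (Φ * S₁ * Φᵀ).rank = n₂ ∧
    (Φ * S₂ * Φᵀ).rank = n₁ ∧
    (Φ * (S₁ + S₂) * Φᵀ).rank = n₁ + n₂ ∧
    (2 * (Φ * (S₁ + S₂) * Φᵀ).rank : ℤ) - (Φ * S₁ * Φᵀ).rank - (Φ * S₂ * Φᵀ).rank =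
      (2 * (S₁ + S₂).rank : ℤ) - S₁.rank - S₂.rank := by
  classical
  subst hΦ
  set Φ := Matrix.of (Sum.elim v w) with hΦdef
  -- memberships
  have hvmem : ∀ i, v i ∈ LinearMap.ker S₁.mulVecLin := fun i => by
    rw [← hspan₁]; exact Submodule.subset_span ⟨Sum.inr i, rfl⟩
  have hwmem : ∀ j, w j ∈ LinearMap.ker S₂.mulVecLin := fun j => by
    rw [← hspan₂]; exact Submodule.subset_span ⟨Sum.inr j, rfl⟩
  -- extracted orthogonality
  have hgw : ∀ a b : Fin n₂, w a ⬝ᵥ w b = if a = b then (1:ℝ) else 0 := fun a b => by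
    simpa using horth₂ (Sum.inr a) (Sum.inr b)
  have hgv : ∀ a b : Fin n₁, v a ⬝ᵥ v b = if a = b then (1:ℝ) else 0 := fun a b => by
    simpa using horth₁ (Sum.inr a) (Sum.inr b)
  have hgu : ∀ a b : Fin m, u a ⬝ᵥ u b = if a = b then (1:ℝ) else 0 := fun a b => by
    simpa using horth₁ (Sum.inl a) (Sum.inl b)
  have hwu : ∀ j k, w j ⬝ᵥ u k = 0 := fun j k => by
    simpa using horth₂ (Sum.inr j) (Sum.inl k)
  have hvu : ∀ i k, v i ⬝ᵥ u k = 0 := fun i k => by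
    simpa using horth₁ (Sum.inr i) (Sum.inl k)
  -- kernel of the sum
  have hker12 : LinearMap.ker (S₁ + S₂).mulVecLin
      = LinearMap.ker S₁.mulVecLin ⊓ LinearMap.ker S₂.mulVecLin := by
    ext x
    simp only [LinearMap.mem_ker, Submodule.mem_inf, mulVecLin_apply, add_mulVec]
    constructor
    · intro h
      have e1 : 0 ≤ x ⬝ᵥ S₁ *ᵥ x := by simpa using h₁.dotProduct_mulVec_nonneg x
      have e2 : 0 ≤ x ⬝ᵥ S₂ *ᵥ x := by simpa using h₂.dotProduct_mulVec_nonneg x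
      have e3 : x ⬝ᵥ S₁ *ᵥ x + x ⬝ᵥ S₂ *ᵥ x = 0 := by
        have := congrArg (fun y => x ⬝ᵥ y) h
        simpa [dotProduct_add] using this
      exact ⟨psd_dot_zero h₁ (by linarith), psd_dot_zero h₂ (by linarith)⟩
    · rintro ⟨a, b⟩; rw [a, b, add_zero]
  -- Φᵀ *ᵥ c
  have hPhiT : ∀ c : Fin n₁ ⊕ Fin n₂ → ℝ,
      Φᵀ *ᵥ c = (∑ i, c (Sum.inl i) • v i) + (∑ j, c (Sum.inr j) • w j) := fun c => by
    rw [hΦdef, transpose_of_mulVec, Fintype.sum_sum_type]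
    simp
  -- dims of kernels of S's
  have hd1 : Module.finrank ℝ (LinearMap.ker S₁.mulVecLin) = m + n₁ := by
    rw [← hspan₁, finrank_span_eq_card (li_of_gram _ horth₁), Fintype.card_sum,
      Fintype.card_fin, Fintype.card_fin]
  have hd2 : Module.finrank ℝ (LinearMap.ker S₂.mulVecLin) = m + n₂ := by
    rw [← hspan₂, finrank_span_eq_card (li_of_gram _ horth₂), Fintype.card_sum,
      Fintype.card_fin, Fintype.card_fin]
  have hd12 : Module.finrank ℝ (LinearMap.ker (S₁ + S₂).mulVecLin) = m := by
    rw [hker12, ← hspanu, finrank_span_eq_card (li_of_gram _ hgu), Fintype.card_fin]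
  -- rank-nullity on the big matrices
  have hrn : ∀ S : Matrix (Fin N) (Fin N) ℝ,
      S.rank + Module.finrank ℝ (LinearMap.ker S.mulVecLin) = N := fun S => by
    rw [Matrix.rank, LinearMap.finrank_range_add_finrank_ker,
      Module.finrank_fintype_fun_eq_card, Fintype.card_fin]
  have hr1 := hrn S₁; rw [hd1] at hr1
  have hr2 := hrn S₂; rw [hd2] at hr2
  have hr12 := hrn (S₁ + S₂); rw [hd12] at hr12
  -- kernel computations for the sandwiches
  have hK1 : LinearMap.ker ((S₁ * Φᵀ).mulVecLin)
      = LinearMap.ker (LinearMap.funLeft ℝ ℝ (Sum.inr : Fin n₂ → Fin n₁ ⊕ Fin n₂)) := by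
    ext c
    simp only [LinearMap.mem_ker, mulVecLin_apply, ← mulVec_mulVec, LinearMap.funLeft_apply]
    constructor
    · intro h
      have hmem : Φᵀ *ᵥ c ∈ LinearMap.ker S₁.mulVecLin := LinearMap.mem_ker.mpr (by simpa using h)
      have hv : (∑ i, c (Sum.inl i) • v i) ∈ LinearMap.ker S₁.mulVecLin :=
        Submodule.sum_mem _ fun i _ => Submodule.smul_mem _ _ (hvmem i)
      have hy : (∑ j, c (Sum.inr j) • w j) ∈ LinearMap.ker S₁.mulVecLin := by
        have := Submodule.sub_mem _ hmem hv
        rwa [hPhiT, add_sub_cancel_left] at this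
      have hy2 : (∑ j, c (Sum.inr j) • w j) ∈ LinearMap.ker S₂.mulVecLin :=
        Submodule.sum_mem _ fun j _ => Submodule.smul_mem _ _ (hwmem j)
      have hyu : (∑ j, c (Sum.inr j) • w j) ∈ Submodule.span ℝ (Set.range u) := by
        rw [hspanu]; exact ⟨hy, hy2⟩
      funext j
      have hz := dot_span_zero u (w j) (hwu j) hyu
      rw [dot_sum_orthonormal w hgw (fun j => c (Sum.inr j)) j] at hz
      simpa using hz
    · intro h
      have hc : ∀ j, c (Sum.inr j) = 0 := fun j => congrFun h j
      have : Φᵀ *ᵥ c ∈ LinearMap.ker S₁.mulVecLin := by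
        rw [hPhiT]
        simp only [hc, zero_smul, Finset.sum_const_zero, add_zero]
        exact Submodule.sum_mem _ fun i _ => Submodule.smul_mem _ _ (hvmem i)
      simpa using LinearMap.mem_ker.mp this
  have hK2 : LinearMap.ker ((S₂ * Φᵀ).mulVecLin)
      = LinearMap.ker (LinearMap.funLeft ℝ ℝ (Sum.inl : Fin n₁ → Fin n₁ ⊕ Fin n₂)) := by
    ext c
    simp only [LinearMap.mem_ker, mulVecLin_apply, ← mulVec_mulVec, LinearMap.funLeft_apply]
    constructor
    · intro h
      have hmem : Φᵀ *ᵥ c ∈ LinearMap.ker S₂.mulVecLin := LinearMap.mem_ker.mpr (by simpa using h)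
      have hw : (∑ j, c (Sum.inr j) • w j) ∈ LinearMap.ker S₂.mulVecLin :=
        Submodule.sum_mem _ fun j _ => Submodule.smul_mem _ _ (hwmem j)
      have hy : (∑ i, c (Sum.inl i) • v i) ∈ LinearMap.ker S₂.mulVecLin := by
        have := Submodule.sub_mem _ hmem hw
        rwa [hPhiT, add_sub_cancel_right] at this
      have hy1 : (∑ i, c (Sum.inl i) • v i) ∈ LinearMap.ker S₁.mulVecLin :=
        Submodule.sum_mem _ fun i _ => Submodule.smul_mem _ _ (hvmem i)
      have hyu : (∑ i, c (Sum.inl i) • v i) ∈ Submodule.span ℝ (Set.range u) := by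
        rw [hspanu]; exact ⟨hy1, hy⟩
      funext i
      have hz := dot_span_zero u (v i) (hvu i) hyu
      rw [dot_sum_orthonormal v hgv (fun i => c (Sum.inl i)) i] at hz
      simpa using hz
    · intro h
      have hc : ∀ i, c (Sum.inl i) = 0 := fun i => congrFun h i
      have : Φᵀ *ᵥ c ∈ LinearMap.ker S₂.mulVecLin := by
        rw [hPhiT]
        simp only [hc, zero_smul, Finset.sum_const_zero, zero_add]
        exact Submodule.sum_mem _ fun j _ => Submodule.smul_mem _ _ (hwmem j)
      simpa using LinearMap.mem_ker.mp this
  have hK12 : LinearMap.ker (((S₁ + S₂) * Φᵀ).mulVecLin) = ⊥ := by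
    rw [Submodule.eq_bot_iff]
    intro c hc
    have hmem : Φᵀ *ᵥ c ∈ LinearMap.ker (S₁ + S₂).mulVecLin := by
      rw [LinearMap.mem_ker, mulVecLin_apply, mulVec_mulVec]
      exact hc
    rw [hker12] at hmem
    have hmemu : Φᵀ *ᵥ c ∈ Submodule.span ℝ (Set.range u) := by rw [hspanu]; exact hmem
    have hw : (∑ j, c (Sum.inr j) • w j) ∈ LinearMap.ker S₂.mulVecLin :=
      Submodule.sum_mem _ fun j _ => Submodule.smul_mem _ _ (hwmem j)
    have hp2 : (∑ i, c (Sum.inl i) • v i) ∈ LinearMap.ker S₂.mulVecLin := by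
      have := Submodule.sub_mem _ hmem.2 hw
      rwa [hPhiT, add_sub_cancel_right] at this
    have hp1 : (∑ i, c (Sum.inl i) • v i) ∈ LinearMap.ker S₁.mulVecLin :=
      Submodule.sum_mem _ fun i _ => Submodule.smul_mem _ _ (hvmem i)
    have hpu : (∑ i, c (Sum.inl i) • v i) ∈ Submodule.span ℝ (Set.range u) := by
      rw [hspanu]; exact ⟨hp1, hp2⟩
    have hci : ∀ i, c (Sum.inl i) = 0 := fun i => by
      have hz := dot_span_zero u (v i) (hvu i) hpu
      rwa [dot_sum_orthonormal v hgv (fun i => c (Sum.inl i)) i] at hz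
    have hqu : (∑ j, c (Sum.inr j) • w j) ∈ Submodule.span ℝ (Set.range u) := by
      have := Submodule.sub_mem _ hmemu hpu
      rwa [hPhiT, add_sub_cancel_left] at this
    have hcj : ∀ j, c (Sum.inr j) = 0 := fun j => by
      have hz := dot_span_zero u (w j) (hwu j) hqu
      rwa [dot_sum_orthonormal w hgw (fun j => c (Sum.inr j)) j] at hz
    funext a
    cases a with
    | inl i => exact hci i
    | inr j => exact hcj j
  -- dims of the funLeft kernels
  have hfl : ∀ (k : ℕ) (f : Fin k → Fin n₁ ⊕ Fin n₂) (hf : Function.Injective f),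
      Module.finrank ℝ (LinearMap.ker (LinearMap.funLeft ℝ ℝ f)) + k = n₁ + n₂ := by
    intro k f hf
    have hs := LinearMap.funLeft_surjective_of_injective ℝ ℝ f hf
    have h := LinearMap.finrank_range_add_finrank_ker (LinearMap.funLeft ℝ ℝ f)
    rw [LinearMap.range_eq_top.mpr hs, finrank_top, Module.finrank_fintype_fun_eq_card,
      Module.finrank_fintype_fun_eq_card, Fintype.card_sum, Fintype.card_fin,
      Fintype.card_fin, Fintype.card_fin] at h
    omega
  have hfl1 := hfl n₂ Sum.inr Sum.inr_injective
  have hfl2 := hfl n₁ Sum.inl Sum.inl_injective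
  -- sandwich ranks
  have hs1 := rank_sandwich h₁ Φ
  rw [hK1, Fintype.card_sum, Fintype.card_fin, Fintype.card_fin] at hs1
  have hs2 := rank_sandwich h₂ Φ
  rw [hK2, Fintype.card_sum, Fintype.card_fin, Fintype.card_fin] at hs2
  have hs12 := rank_sandwich (h₁.add h₂) Φ
  rw [hK12, finrank_bot, Fintype.card_sum, Fintype.card_fin, Fintype.card_fin] at hs12
  have e1 : (Φ * S₁ * Φᵀ).rank = n₂ := by omega
  have e2 : (Φ * S₂ * Φᵀ).rank = n₁ := by omega
  have e12 : (Φ * (S₁ + S₂) * Φᵀ).rank = n₁ + n₂ := by omega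
  refine ⟨e1, e2, e12, ?_⟩
  rw [e1, e2, e12]
  omega
end
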